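/- Theorem 6 (upper bound of recovery error for HALISTA, with γ₂ⁿ ≡ 1). Assume μ := μ(A) > 0, let S ⊆ {1, …, N} with 2 ≤ |S|, 2|S| ≤ N and |S| < (2 + 1/μ)/4, let B_x > 0, x* ∈ X(B_x, S), b = A x*, and fix W ∈ W_s(A). Let x⁰ = 0 and, for every n: γ₁ⁿ ∈ (0, 2/(1 + 4μ|S| − 2μ)); θ₁ⁿ = γ₁ⁿμ‖xⁿ − x*‖₁ and vⁿ = S_{θ₁ⁿ}(xⁿ + γ₁ⁿWᵀ(b − Axⁿ)); uⁿ ∈ ℝ^N arbitrary; θ₂ⁿ = μ‖uⁿ − x*‖₁ + μ((N − |S|)/(|S| − 1))·‖uⁿ‖₁ and wⁿ = S_{θ₂ⁿ}(uⁿ + Wᵀ(b − Auⁿ)); xⁿ⁺¹ = αⁿvⁿ + (1 − αⁿ)wⁿ with θ₂ⁿ/(θ₁ⁿ + θ₂ⁿ) ≤ αⁿ < 1 if θ₁ⁿ ≠ 0 and αⁿ = 1 if θ₁ⁿ = 0. Then for every n ∈ ℕ: supp(xⁿ) ⊆ S and ‖xⁿ − x*‖₂ ≤ |S|·B_x·exp(−Σ_{k=0}^{n−1}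 c_a^k), where c_a^k = −log(2μγ₁^k(2|S| − 1) + |1 − γ₁^k|) > 0. -/

import Mathlib

open scoped Classical

/-- The Euclidean (ℓ²) norm on `Fin n → ℝ`. -/
noncomputable def l2norm {n : ℕ} (x : Fin n → ℝ) : ℝ := Real.sqrt (∑ i, (x i) ^ 2)

/-- The ℓ¹ norm on `Fin n → ℝ`. -/
noncomputable def l1norm {n : ℕ} (x : Fin n → ℝ) : ℝ := ∑ i, |x i|

/-- Componentwise soft-thresholding: `S_θ(z)ᵢ = sgn(zᵢ) * max (|zᵢ| - θ) 0`. -/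
noncomputable def soft {n : ℕ} (θ : ℝ) (z : Fin n → ℝ) : Fin n → ℝ :=
  fun i => Real.sign (z i) * max (|z i| - θ) 0

/-- `max_{i ≠ j} |WᵢᵀAⱼ|`, where `Wᵢ`, `Aⱼ` are columns. -/
noncomputable def mutualMax {m n : ℕ} (A W : Matrix (Fin m) (Fin n) ℝ) : ℝ :=
  sSup {c : ℝ | ∃ i j : Fin n, i ≠ j ∧ c = |∑ k, W k i * A k j|}

/-- Generalized mutual coherence `μ(A)`: the infimum of `max_{i≠j} |WᵢᵀAⱼ|` over all
matrices `W` with `WᵢᵀAᵢ = 1` for all `i`. -/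
noncomputable def gmc {m n : ℕ} (A : Matrix (Fin m) (Fin n) ℝ) : ℝ :=
  sInf {c : ℝ | ∃ W : Matrix (Fin m) (Fin n) ℝ,
    (∀ i, (∑ k, W k i * A k i) = 1) ∧ c = mutualMax A W}

/-- `W ∈ W_s(A)`: `WᵢᵀAᵢ = 1` for all `i`, and `W` attains the infimum defining `μ(A)`. -/
def memWs {m n : ℕ} (A W : Matrix (Fin m) (Fin n) ℝ) : Prop :=
  (∀ i, (∑ k, W k i * A k i) = 1) ∧ mutualMax A W = gmc A

lemma l1norm_nonneg {n : ℕ} (x : Fin n → ℝ) : 0 ≤ l1norm x :=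
  Finset.sum_nonneg fun _ _ => abs_nonneg _

lemma l2norm_le_l1norm {n : ℕ} (x : Fin n → ℝ) : l2norm x ≤ l1norm x := by
  have h1 : ∑ i, (x i) ^ 2 ≤ (∑ i, |x i|) ^ 2 := by
    have := Finset.sum_sq_le_sq_sum_of_nonneg (f := fun i => |x i|) (s := Finset.univ)
      (fun i _ => abs_nonneg _)
    simpa [sq_abs] using this
  calc l2norm x ≤ Real.sqrt ((∑ i, |x i|) ^ 2) := Real.sqrt_le_sqrt h1
    _ = l1norm x := Real.sqrt_sq (l1norm_nonneg x)

lemma soft_eq_zero {θ z : ℝ} (h : |z| ≤ θ) : Real.sign z * max (|z| - θ) 0 = 0 := by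
  rw [max_eq_right (by linarith), mul_zero]

lemma soft_sub_le {θ z : ℝ} (hθ : 0 ≤ θ) : |Real.sign z * max (|z| - θ) 0 - z| ≤ θ := by
  rcases le_or_gt (|z|) θ with h | h
  · rw [max_eq_right (by linarith), mul_zero]
    simpa using h
  · rw [max_eq_left (by linarith)]
    rcases lt_trichotomy z 0 with hz | hz | hz
    · rw [Real.sign_of_neg hz, abs_of_neg hz]
      have h2 : (-1 : ℝ) * (-z - θ) - z = θ := by ring
      rw [h2, abs_of_nonneg hθ]
    · subst hz; simp at h; linarith
    · rw [Real.sign_of_pos hz, abs_of_pos hz]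
      have h2 : (1 : ℝ) * (z - θ) - z = -θ := by ring
      rw [h2, abs_neg, abs_of_nonneg hθ]

lemma coh_bound {M N : ℕ} (A W : Matrix (Fin M) (Fin N) ℝ)
    (hW : mutualMax A W = gmc A) {i j : Fin N} (hij : i ≠ j) :
    |∑ k, W k i * A k j| ≤ gmc A := by
  rw [← hW]
  apply le_csSup
  · apply Set.Finite.bddAbove
    apply Set.Finite.subset (Set.finite_range (fun p : Fin N × Fin N => |∑ k, W k p.1 * A k p.2|))
    rintro c ⟨i, j, _, rfl⟩; exact ⟨(i, j), rfl⟩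
  · exact ⟨i, j, hij, rfl⟩

lemma mulVec_key {M N : ℕ} (A W : Matrix (Fin M) (Fin N) ℝ) (xstar y : Fin N → ℝ) (i : Fin N) :
    W.transpose.mulVec (A.mulVec xstar - A.mulVec y) i
      = ∑ j, (∑ k, W k i * A k j) * (xstar j - y j) := by
  simp only [Matrix.mulVec, Matrix.transpose_apply, dotProduct, Pi.sub_apply]
  calc ∑ k, W k i * ((∑ j, A k j * xstar j) - ∑ j, A k j * y j)
      = ∑ k, ∑ j, W k i * A k j * (xstar j - y j) := by
        apply Finset.sum_congr rfl; intro k _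
        rw [← Finset.sum_sub_distrib, Finset.mul_sum]
        apply Finset.sum_congr rfl; intro j _; ring
    _ = ∑ j, ∑ k, W k i * A k j * (xstar j - y j) := Finset.sum_comm
    _ = ∑ j, (∑ k, W k i * A k j) * (xstar j - y j) := by
        apply Finset.sum_congr rfl; intro j _; rw [Finset.sum_mul]

lemma z_decomp {N : ℕ} (g : Fin N → Fin N → ℝ) (hgd : ∀ i, g i i = 1)
    (y xstar : Fin N → ℝ) (γ : ℝ) (i : Fin N) :
    y i + γ * ∑ j, g i j * (xstar j - y j) - xstar i
      = (1 - γ) * (y i - xstar i)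
        - γ * ∑ j ∈ Finset.univ.erase i, g i j * (y j - xstar j) := by
  rw [← Finset.add_sum_erase Finset.univ (fun j => g i j * (xstar j - y j))
    (Finset.mem_univ i), hgd]
  have h : ∑ j ∈ Finset.univ.erase i, g i j * (xstar j - y j)
      = - ∑ j ∈ Finset.univ.erase i, g i j * (y j - xstar j) := by
    rw [← Finset.sum_neg_distrib]
    exact Finset.sum_congr rfl fun j _ => by ring
  rw [h]; ring

lemma erase_abs_bound {N : ℕ} {μ : ℝ} (i : Fin N) (g e : Fin N → ℝ)
    (hg : ∀ j, j ≠ i → |g j| ≤ μ) :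
    |∑ j ∈ Finset.univ.erase i, g j * e j| ≤ μ * (l1norm e - |e i|) := by
  have h1 : ∑ j ∈ Finset.univ.erase i, |e j| = l1norm e - |e i| :=
    Finset.sum_erase_eq_sub (Finset.mem_univ i)
  calc |∑ j ∈ Finset.univ.erase i, g j * e j| ≤ ∑ j ∈ Finset.univ.erase i, |g j * e j| :=
      Finset.abs_sum_le_sum_abs _ _
    _ ≤ ∑ j ∈ Finset.univ.erase i, μ * |e j| := by
      apply Finset.sum_le_sum; intro j hj
      rw [abs_mul]
      exact mul_le_mul_of_nonneg_right (hg j (Finset.ne_of_mem_erase hj)) (abs_nonneg _)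
    _ = μ * (l1norm e - |e i|) := by rw [← Finset.mul_sum, h1]

set_option maxHeartbeats 1000000 in
/-- Theorem 6: upper bound of recovery error for HALISTA (with γ₂ⁿ ≡ 1). -/
theorem halista_recovery {M N : ℕ} (hM : 0 < M) (hN : 0 < N)
    (A : Matrix (Fin M) (Fin N) ℝ)
    (hcols : ∀ j, l2norm (fun i => A i j) = 1)
    (hμ : 0 < gmc A)
    (S : Finset (Fin N)) (hS2 : 2 ≤ S.card) (hSN : 2 * S.card ≤ N)
    (hSμ : (S.card : ℝ) < (2 + 1 / gmc A) / 4)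
    (Bx : ℝ) (hBx : 0 < Bx)
    (xstar : Fin N → ℝ) (hsupp : ∀ i, xstar i ≠ 0 ↔ i ∈ S) (hxb : ∀ i, |xstar i| ≤ Bx)
    (b : Fin M → ℝ) (hb : b = A.mulVec xstar)
    (W : Matrix (Fin M) (Fin N) ℝ) (hW : memWs A W)
    (x v u w : ℕ → Fin N → ℝ)
    (γ₁ θ₁ θ₂ α : ℕ → ℝ)
    (hx0 : x 0 = 0)
    (hγ₁ : ∀ n, 0 < γ₁ n ∧ γ₁ n < 2 / (1 + 4 * gmc A * (S.card : ℝ) - 2 * gmc A))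
    (hθ₁ : ∀ n, θ₁ n = γ₁ n * gmc A * l1norm (x n - xstar))
    (hv : ∀ n, v n = soft (θ₁ n) (x n + γ₁ n • W.transpose.mulVec (b - A.mulVec (x n))))
    (hθ₂ : ∀ n, θ₂ n = gmc A * l1norm (u n - xstar)
      + gmc A * (((N : ℝ) - (S.card : ℝ)) / ((S.card : ℝ) - 1)) * l1norm (u n))
    (hw : ∀ n, w n = soft (θ₂ n) (u n + W.transpose.mulVec (b - A.mulVec (u n))))
    (hα : ∀ n, (θ₁ n ≠ 0 → θ₂ n / (θ₁ n + θ₂ n) ≤ α n ∧ α n < 1) ∧ (θ₁ n = 0 → α n = 1))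
    (hxs : ∀ n, x (n + 1) = α n • v n + (1 - α n) • w n)
    (ca : ℕ → ℝ)
    (hca : ∀ k, ca k =
      -Real.log (2 * gmc A * γ₁ k * (2 * (S.card : ℝ) - 1) + |1 - γ₁ k|)) :
    (∀ k, 0 < ca k) ∧
    ∀ n : ℕ, (∀ i, x n i ≠ 0 → i ∈ S) ∧
      l2norm (x n - xstar) ≤
        (S.card : ℝ) * Bx * Real.exp (-(∑ k ∈ Finset.range n, ca k)) := by
  set μ : ℝ := gmc A with hμdef
  set sc : ℝ := (S.card : ℝ) with hscdef
  have hs2 : (2 : ℝ) ≤ sc := by rw [hscdef]; exact_mod_cast hS2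
  have hNs : 2 * sc ≤ (N : ℝ) := by rw [hscdef]; exact_mod_cast hSN
  -- 2μ(2s-1) < 1
  have hμs : 2 * μ * (2 * sc - 1) < 1 := by
    have h1 : sc * (4 * μ) < ((2 + 1 / μ) / 4) * (4 * μ) :=
      mul_lt_mul_of_pos_right hSμ (by positivity)
    have hμ0 : μ ≠ 0 := ne_of_gt hμ
    have h2 : ((2 + 1 / μ) / 4) * (4 * μ) = 2 * μ + 1 := by
      field_simp
    nlinarith [h1, h2]
  -- the contraction factor bounds
  have hq : ∀ k, 0 < 2 * μ * γ₁ k * (2 * sc - 1) + |1 - γ₁ k| ∧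
      2 * μ * γ₁ k * (2 * sc - 1) + |1 - γ₁ k| < 1 := by
    intro k
    obtain ⟨hγ0, hγ2⟩ := hγ₁ k
    have h2s : (0 : ℝ) < 2 * sc - 1 := by linarith
    constructor
    · have : 0 < 2 * μ * γ₁ k * (2 * sc - 1) := by positivity
      have := abs_nonneg (1 - γ₁ k)
      linarith
    · rcases le_or_gt (γ₁ k) 1 with h | h
      · rw [abs_of_nonneg (by linarith : (0:ℝ) ≤ 1 - γ₁ k)]
        nlinarith [mul_lt_mul_of_pos_left hμs hγ0]
      · rw [abs_of_neg (by linarith : (1:ℝ) - γ₁ k < 0)]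
        have hden : (0 : ℝ) < 1 + 4 * μ * sc - 2 * μ := by nlinarith
        have h3 : γ₁ k * (1 + 4 * μ * sc - 2 * μ) < 2 := (lt_div_iff₀ hden).mp hγ2
        nlinarith
  have hca_pos : ∀ k, 0 < ca k := by
    intro k
    rw [hca k]
    have := Real.log_neg (hq k).1 (hq k).2
    linarith
  refine ⟨hca_pos, ?_⟩
  -- setup
  set g : Fin N → Fin N → ℝ := fun i j => ∑ k, W k i * A k j with hgdef
  have hgd : ∀ i, g i i = 1 := hW.1
  have hgo : ∀ i j, i ≠ j → |g i j| ≤ μ := fun i j h => coh_bound A W hW.2 h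
  have hxstar0 : ∀ i, i ∉ S → xstar i = 0 := by
    intro i hi
    by_contra h
    exact hi ((hsupp i).mp h)
  have hWv : ∀ (y : Fin N → ℝ) (i : Fin N),
      W.transpose.mulVec (b - A.mulVec y) i = ∑ j, g i j * (xstar j - y j) := by
    intro y i
    rw [hb]
    exact mulVec_key A W xstar y i
  -- strengthened induction
  have main : ∀ n, (∀ i, x n i ≠ 0 → i ∈ S) ∧
      l1norm (x n - xstar) ≤ sc * Bx * Real.exp (-(∑ k ∈ Finset.range n, ca k)) := by
    intro n
    induction n with
    | zero =>
      constructor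
      · intro i h
        rw [hx0] at h
        simp at h
      · rw [hx0]
        simp only [Finset.range_zero, Finset.sum_empty, neg_zero, Real.exp_zero, mul_one]
        have h1 : l1norm ((0 : Fin N → ℝ) - xstar) = ∑ i ∈ S, |((0 : Fin N → ℝ) - xstar) i| := by
          unfold l1norm
          exact (Finset.sum_subset (Finset.subset_univ S)
            (fun i _ hi => by simp [hxstar0 i hi])).symm
        rw [h1]
        calc ∑ i ∈ S, |((0 : Fin N → ℝ) - xstar) i| ≤ ∑ _i ∈ S, Bx := by
              apply Finset.sum_le_sum
              intro i _
              simpa using hxb i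
          _ = sc * Bx := by rw [Finset.sum_const, nsmul_eq_mul]
    | succ n ih =>
      obtain ⟨hsup, hE⟩ := ih
      obtain ⟨hγ0, hγ2⟩ := hγ₁ n
      set E : ℝ := l1norm (x n - xstar) with hEdef
      set F : ℝ := l1norm (u n - xstar) with hFdef
      set U : ℝ := l1norm (u n) with hUdef
      have hE0 : 0 ≤ E := l1norm_nonneg _
      have hF0 : 0 ≤ F := l1norm_nonneg _
      have hU0 : 0 ≤ U := l1norm_nonneg _
      have hθ₁E : θ₁ n = γ₁ n * μ * E := by rw [hθ₁ n, ← hEdef]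
      have hθ₂eq : θ₂ n = μ * F + μ * (((N : ℝ) - sc) / (sc - 1)) * U := by
        rw [hθ₂ n, ← hFdef, ← hUdef]
      have hθ₁0 : 0 ≤ θ₁ n := by rw [hθ₁E]; positivity
      have hθ₂F : μ * F ≤ θ₂ n := by
        rw [hθ₂eq]
        have h1 : 0 ≤ ((N : ℝ) - sc) / (sc - 1) := div_nonneg (by linarith) (by linarith)
        nlinarith [mul_nonneg (mul_nonneg hμ.le h1) hU0]
      have hθ₂0 : 0 ≤ θ₂ n := le_trans (by positivity) hθ₂F
      -- alpha facts
      have hα1 : α n ≤ 1 := by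
        rcases eq_or_ne (θ₁ n) 0 with h | h
        · rw [(hα n).2 h]
        · exact ((hα n).1 h).2.le
      have hα0 : 0 ≤ α n := by
        rcases eq_or_ne (θ₁ n) 0 with h | h
        · rw [(hα n).2 h]; norm_num
        · exact le_trans (div_nonneg hθ₂0 (by linarith [lt_of_le_of_ne hθ₁0 (Ne.symm h)]))
            ((hα n).1 h).1
      have hαθ : (1 - α n) * θ₂ n ≤ α n * θ₁ n := by
        rcases eq_or_ne (θ₁ n) 0 with h | h
        · rw [(hα n).2 h]; simp [h]
        · have hθ₁pos : 0 < θ₁ n := lt_of_le_of_ne hθ₁0 (Ne.symm h)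
          have hpos : 0 < θ₁ n + θ₂ n := by linarith
          have := (div_le_iff₀ hpos).mp ((hα n).1 h).1
          nlinarith
      -- v step facts
      have hvz : ∀ i : Fin N,
          (x n + γ₁ n • W.transpose.mulVec (b - A.mulVec (x n))) i - xstar i
            = (1 - γ₁ n) * ((x n - xstar) i)
              - γ₁ n * ∑ j ∈ Finset.univ.erase i, g i j * ((x n - xstar) j) := by
        intro i
        have h1 : (x n + γ₁ n • W.transpose.mulVec (b - A.mulVec (x n))) i
            = x n i + γ₁ n * ∑ j, g i j * (xstar j - x n j) := by
          simp [hWv (x n) i]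
        rw [h1]
        simpa [Pi.sub_apply] using z_decomp g hgd (x n) xstar (γ₁ n) i
      have hvz_abs : ∀ i : Fin N,
          |(x n + γ₁ n • W.transpose.mulVec (b - A.mulVec (x n))) i - xstar i|
            ≤ |1 - γ₁ n| * |(x n - xstar) i| + γ₁ n * (μ * (E - |(x n - xstar) i|)) := by
        intro i
        rw [hvz i]
        have htri : |(1 - γ₁ n) * ((x n - xstar) i)
            - γ₁ n * ∑ j ∈ Finset.univ.erase i, g i j * ((x n - xstar) j)|
            ≤ |(1 - γ₁ n) * ((x n - xstar) i)|
              + |γ₁ n * ∑ j ∈ Finset.univ.erase i, g i j * ((x n - xstar) j)| := by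
          rw [sub_eq_add_neg]
          exact (abs_add_le _ _).trans (by rw [abs_neg])
        have hb2 : |γ₁ n * ∑ j ∈ Finset.univ.erase i, g i j * ((x n - xstar) j)|
            ≤ γ₁ n * (μ * (E - |(x n - xstar) i|)) := by
          rw [abs_mul, abs_of_pos hγ0]
          exact mul_le_mul_of_nonneg_left
            (erase_abs_bound i (g i) (x n - xstar) (fun j hj => hgo i j (Ne.symm hj))) hγ0.le
        calc _ ≤ _ := htri
          _ ≤ |1 - γ₁ n| * |(x n - xstar) i| + γ₁ n * (μ * (E - |(x n - xstar) i|)) := by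
            rw [abs_mul]
            exact add_le_add le_rfl hb2
      have hvoff : ∀ i ∉ S, v n i = 0 := by
        intro i hi
        have hx0' : (x n - xstar) i = 0 := by
          have h1 : x n i = 0 := by
            by_contra h
            exact hi (hsup i h)
          simp [Pi.sub_apply, h1, hxstar0 i hi]
        have h2 := hvz_abs i
        rw [hx0'] at h2
        simp only [abs_zero, mul_zero, zero_add, sub_zero] at h2
        have h3 : (x n + γ₁ n • W.transpose.mulVec (b - A.mulVec (x n))) i - xstar i
            = (x n + γ₁ n • W.transpose.mulVec (b - A.mulVec (x n))) i := by
          rw [hxstar0 i hi, sub_zero]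
        rw [h3] at h2
        rw [hv n]
        apply soft_eq_zero
        rw [hθ₁E]
        calc |(x n + γ₁ n • W.transpose.mulVec (b - A.mulVec (x n))) i|
            ≤ γ₁ n * (μ * E) := h2
          _ = γ₁ n * μ * E := by ring
      have hvS : ∀ i : Fin N, |v n i - xstar i|
          ≤ θ₁ n + |1 - γ₁ n| * |(x n - xstar) i| + γ₁ n * (μ * (E - |(x n - xstar) i|)) := by
        intro i
        rw [hv n]
        set z : Fin N → ℝ := x n + γ₁ n • W.transpose.mulVec (b - A.mulVec (x n)) with hzdef
        have h1 : soft (θ₁ n) z i - xstar i = (soft (θ₁ n) z i - z i) + (z i - xstar i) := by ring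
        rw [h1]
        calc |(soft (θ₁ n) z i - z i) + (z i - xstar i)|
            ≤ |soft (θ₁ n) z i - z i| + |z i - xstar i| := abs_add_le _ _
          _ ≤ θ₁ n + (|1 - γ₁ n| * |(x n - xstar) i| + γ₁ n * (μ * (E - |(x n - xstar) i|))) :=
            add_le_add (soft_sub_le hθ₁0) (hvz_abs i)
          _ = _ := by ring
      -- w step facts
      have hwz : ∀ i : Fin N,
          (u n + W.transpose.mulVec (b - A.mulVec (u n))) i - xstar i
            = - ∑ j ∈ Finset.univ.erase i, g i j * ((u n - xstar) j) := by
        intro i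
        have h1 : (u n + W.transpose.mulVec (b - A.mulVec (u n))) i
            = u n i + 1 * ∑ j, g i j * (xstar j - u n j) := by
          simp [hWv (u n) i]
        rw [h1]
        have := z_decomp g hgd (u n) xstar 1 i
        simpa [Pi.sub_apply] using this
      have hwz_abs : ∀ i : Fin N,
          |(u n + W.transpose.mulVec (b - A.mulVec (u n))) i - xstar i|
            ≤ μ * (F - |(u n - xstar) i|) := by
        intro i
        rw [hwz i, abs_neg]
        exact erase_abs_bound i (g i) (u n - xstar) (fun j hj => hgo i j (Ne.symm hj))
      have hwoff : ∀ i ∉ S, w n i = 0 := by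
        intro i hi
        have h2 := hwz_abs i
        have h3 : (u n + W.transpose.mulVec (b - A.mulVec (u n))) i - xstar i
            = (u n + W.transpose.mulVec (b - A.mulVec (u n))) i := by
          rw [hxstar0 i hi, sub_zero]
        rw [h3] at h2
        rw [hw n]
        apply soft_eq_zero
        have h4 : μ * (F - |(u n - xstar) i|) ≤ μ * F := by
          have := abs_nonneg ((u n - xstar) i)
          nlinarith
        linarith [hθ₂F]
      have hwS : ∀ i : Fin N, |w n i - xstar i| ≤ θ₂ n + μ * (F - |(u n - xstar) i|) := by
        intro i
        rw [hw n]
        set z : Fin N → ℝ := u n + W.transpose.mulVec (b - A.mulVec (u n)) with hzdef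
        have h1 : soft (θ₂ n) z i - xstar i = (soft (θ₂ n) z i - z i) + (z i - xstar i) := by ring
        rw [h1]
        calc |(soft (θ₂ n) z i - z i) + (z i - xstar i)|
            ≤ |soft (θ₂ n) z i - z i| + |z i - xstar i| := abs_add_le _ _
          _ ≤ θ₂ n + μ * (F - |(u n - xstar) i|) :=
            add_le_add (soft_sub_le hθ₂0) (hwz_abs i)
      -- support of x (n+1)
      have hsupnext : ∀ i, x (n + 1) i ≠ 0 → i ∈ S := by
        intro i h
        by_contra hi
        apply h
        rw [hxs n]
        simp [hvoff i hi, hwoff i hi]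
      -- sums over S
      have hsum_e : ∑ i ∈ S, |(x n - xstar) i| = E := by
        rw [hEdef]
        unfold l1norm
        apply Finset.sum_subset (Finset.subset_univ S)
        intro i _ hi
        have h1 : x n i = 0 := by
          by_contra h
          exact hi (hsup i h)
        simp [Pi.sub_apply, h1, hxstar0 i hi]
      have hsum_f : F - ∑ i ∈ S, |(u n - xstar) i| ≤ U := by
        have h1 : F = ∑ i ∈ S, |(u n - xstar) i| + ∑ i ∈ Sᶜ, |(u n - xstar) i| := by
          rw [hFdef]
          unfold l1norm
          rw [Finset.sum_add_sum_compl]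
        have h2 : ∑ i ∈ Sᶜ, |(u n - xstar) i| ≤ U := by
          have h3 : ∑ i ∈ Sᶜ, |(u n - xstar) i| = ∑ i ∈ Sᶜ, |u n i| := by
            apply Finset.sum_congr rfl
            intro i hi
            rw [Finset.mem_compl] at hi
            simp [Pi.sub_apply, hxstar0 i hi]
          rw [h3, hUdef]
          unfold l1norm
          exact Finset.sum_le_sum_of_subset_of_nonneg (Finset.subset_univ _)
            (fun i _ _ => abs_nonneg _)
        linarith
      -- the contraction inequality in ℓ¹
      set q : ℝ := 2 * μ * γ₁ n * (2 * sc - 1) + |1 - γ₁ n| with hqdef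
      have hq0 : 0 < q := (hq n).1
      have hcontr : l1norm (x (n + 1) - xstar) ≤ q * E := by
        have h1 : l1norm (x (n + 1) - xstar) = ∑ i ∈ S, |(x (n + 1) - xstar) i| := by
          unfold l1norm
          refine (Finset.sum_subset (Finset.subset_univ S) ?_).symm
          intro i _ hi
          have h2 : x (n + 1) i = 0 := by
            by_contra h
            exact hi (hsupnext i h)
          simp [Pi.sub_apply, h2, hxstar0 i hi]
        rw [h1]
        have hT1 : ∑ i ∈ S, (θ₁ n + |1 - γ₁ n| * |(x n - xstar) i|
            + γ₁ n * (μ * (E - |(x n - xstar) i|)))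
            = sc * θ₁ n + |1 - γ₁ n| * E + γ₁ n * (μ * (sc * E - E)) := by
          rw [Finset.sum_add_distrib, Finset.sum_add_distrib, Finset.sum_const, nsmul_eq_mul,
            ← Finset.mul_sum, hsum_e]
          have h3 : ∑ i ∈ S, γ₁ n * (μ * (E - |(x n - xstar) i|))
              = γ₁ n * (μ * (sc * E - E)) := by
            rw [← Finset.mul_sum]
            congr 1
            rw [← Finset.mul_sum]
            congr 1
            rw [Finset.sum_sub_distrib, Finset.sum_const, nsmul_eq_mul, hsum_e]
          rw [h3]
        have hT2 : ∑ i ∈ S, (θ₂ n + μ * (F - |(u n - xstar) i|))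
            = sc * θ₂ n + μ * (sc * F - ∑ i ∈ S, |(u n - xstar) i|) := by
          rw [Finset.sum_add_distrib, Finset.sum_const, nsmul_eq_mul]
          congr 1
          rw [← Finset.mul_sum]
          congr 1
          rw [Finset.sum_sub_distrib, Finset.sum_const, nsmul_eq_mul]
        have step1 : ∑ i ∈ S, |(x (n + 1) - xstar) i|
            ≤ α n * ∑ i ∈ S, (θ₁ n + |1 - γ₁ n| * |(x n - xstar) i|
                + γ₁ n * (μ * (E - |(x n - xstar) i|)))
              + (1 - α n) * ∑ i ∈ S, (θ₂ n + μ * (F - |(u n - xstar) i|)) := by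
          rw [Finset.mul_sum, Finset.mul_sum, ← Finset.sum_add_distrib]
          apply Finset.sum_le_sum
          intro i _
          have h4 : (x (n + 1) - xstar) i
              = α n * (v n i - xstar i) + (1 - α n) * (w n i - xstar i) := by
            rw [hxs n]
            simp only [Pi.sub_apply, Pi.add_apply, Pi.smul_apply, smul_eq_mul]
            ring
          rw [h4]
          calc |α n * (v n i - xstar i) + (1 - α n) * (w n i - xstar i)|
              ≤ |α n * (v n i - xstar i)| + |(1 - α n) * (w n i - xstar i)| := abs_add_le _ _
            _ = α n * |v n i - xstar i| + (1 - α n) * |w n i - xstar i| := by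
                rw [abs_mul, abs_mul, abs_of_nonneg hα0, abs_of_nonneg (show (0:ℝ) ≤ 1 - α n by linarith)]
            _ ≤ _ := add_le_add (mul_le_mul_of_nonneg_left (hvS i) hα0)
                (mul_le_mul_of_nonneg_left (hwS i) (by linarith))
        rw [hT1, hT2] at step1
        -- scalar endgame
        have h2s : (0 : ℝ) < 2 * sc - 1 := by linarith
        have hsc1 : sc - 1 ≠ 0 := by intro h; linarith [sub_eq_zero.mp h]
        have hT2b : sc * θ₂ n + μ * (sc * F - ∑ i ∈ S, |(u n - xstar) i|)
            ≤ (2 * sc - 1) * θ₂ n := by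
          have e1 : μ * (sc * F - ∑ i ∈ S, |(u n - xstar) i|)
              = μ * (sc - 1) * F + μ * (F - ∑ i ∈ S, |(u n - xstar) i|) := by ring
          have e2 : μ * (F - ∑ i ∈ S, |(u n - xstar) i|) ≤ μ * U :=
            mul_le_mul_of_nonneg_left hsum_f hμ.le
          have e3 : (sc - 1) * θ₂ n = μ * (sc - 1) * F + μ * ((N : ℝ) - sc) * U := by
            rw [hθ₂eq]
            field_simp
          have e4 : μ * U ≤ μ * ((N : ℝ) - sc) * U := by
            nlinarith [mul_nonneg (mul_nonneg hμ.le hU0)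
              (show (0:ℝ) ≤ (N : ℝ) - sc - 1 by linarith)]
          linarith
        have hT1b : sc * θ₁ n + |1 - γ₁ n| * E + γ₁ n * (μ * (sc * E - E))
            = (γ₁ n * μ * (2 * sc - 1) + |1 - γ₁ n|) * E := by
          rw [hθ₁E]; ring
        rw [hT1b] at step1
        have hT1nn : 0 ≤ (γ₁ n * μ * (2 * sc - 1) + |1 - γ₁ n|) * E := by
          have hx1 : 0 ≤ γ₁ n * μ * (2 * sc - 1) := by positivity
          have hx2 := abs_nonneg (1 - γ₁ n)
          nlinarith
        have a1 : (1 - α n) * (sc * θ₂ n + μ * (sc * F - ∑ i ∈ S, |(u n - xstar) i|))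
            ≤ (1 - α n) * ((2 * sc - 1) * θ₂ n) :=
          mul_le_mul_of_nonneg_left hT2b (by linarith)
        have a2 : (1 - α n) * ((2 * sc - 1) * θ₂ n) = (2 * sc - 1) * ((1 - α n) * θ₂ n) := by
          ring
        have a3 : (2 * sc - 1) * ((1 - α n) * θ₂ n) ≤ (2 * sc - 1) * (α n * θ₁ n) :=
          mul_le_mul_of_nonneg_left hαθ h2s.le
        have a4 : α n * θ₁ n ≤ θ₁ n := mul_le_of_le_one_left hθ₁0 hα1
        have a5 : (2 * sc - 1) * (α n * θ₁ n) ≤ (2 * sc - 1) * θ₁ n :=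
          mul_le_mul_of_nonneg_left a4 h2s.le
        have a6 : α n * ((γ₁ n * μ * (2 * sc - 1) + |1 - γ₁ n|) * E)
            ≤ (γ₁ n * μ * (2 * sc - 1) + |1 - γ₁ n|) * E :=
          mul_le_of_le_one_left hT1nn hα1
        have a7 : (γ₁ n * μ * (2 * sc - 1) + |1 - γ₁ n|) * E + (2 * sc - 1) * θ₁ n = q * E := by
          rw [hqdef, hθ₁E]; ring
        linarith
      -- conclude
      have hqe : Real.exp (-(ca n)) = q := by
        rw [hca n, neg_neg]
        exact Real.exp_log hq0
      have hexp : Real.exp (-(∑ k ∈ Finset.range (n + 1), ca k))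
          = Real.exp (-(∑ k ∈ Finset.range n, ca k)) * q := by
        rw [Finset.sum_range_succ, neg_add, Real.exp_add, hqe]
      refine ⟨hsupnext, ?_⟩
      calc l1norm (x (n + 1) - xstar) ≤ q * E := hcontr
        _ ≤ q * (sc * Bx * Real.exp (-(∑ k ∈ Finset.range n, ca k))) :=
            mul_le_mul_of_nonneg_left hE hq0.le
        _ = sc * Bx * Real.exp (-(∑ k ∈ Finset.range (n + 1), ca k)) := by
            rw [hexp]; ring
  intro n
  obtain ⟨h1, h2⟩ := main n
  exact ⟨h1, le_trans (l2norm_le_l1norm _) h2⟩
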